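/- Let Q be monic of degree t over F_q and let ℓ ≥ 0. For every Hayes class ε with respect to (ℓ,Q) and every integer k ≥ 0, the number of monic polynomials of degree k+t+ℓ over F_q lying in the class ε equals q^k. -/

import Mathlib

open Polynomial

noncomputable section

/-- Hayes equivalence with respect to `ℓ` and a monic polynomial `Q`. -/
def HayesEquiv {Fq : Type*} [Field Fq] (ℓ : ℕ) (Q f g : Polynomial Fq) : Prop :=
  IsCoprime f Q ∧ IsCoprime g Q ∧
    (X : Polynomial Fq) ^ (ℓ + 1) ∣ f.reverse - g.reverse ∧ Q ∣ f - g

/-- The number of monic polynomials of degree `k + t + ℓ` in a given Hayes class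
equals `q^k`. -/
theorem stmt14 {Fq : Type*} [Field Fq] [Fintype Fq]
    (q t ℓ : ℕ) (hq : q = Fintype.card Fq)
    (Q : Polynomial Fq) (hQm : Q.Monic) (hQt : Q.natDegree = t)
    (ε : Polynomial Fq) (hεm : ε.Monic) (hεQ : IsCoprime ε Q)
    (k : ℕ) :
    Nat.card {f : Polynomial Fq // f.Monic ∧ f.natDegree = k + t + ℓ ∧
        HayesEquiv ℓ Q ε f} = q ^ k := by
  classical
  subst hq
  have hQ0 : Q ≠ 0 := hQm.ne_zero
  set n := k + t + ℓ with hn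
  set T : Polynomial Fq := ∑ i ∈ Finset.range (ℓ + 1), C (ε.reverse.coeff i) * X ^ (n - i)
    with hT
  have hTcoeff : ∀ i ≤ ℓ, T.coeff (n - i) = ε.reverse.coeff i := by
    intro i hi
    rw [hT, finset_sum_coeff, Finset.sum_eq_single i]
    · simp
    · intro j hj hji
      simp only [Finset.mem_range] at hj
      have hne : ¬ (n - i = n - j) := by omega
      simp [coeff_X_pow, hne]
    · intro h
      exact absurd (Finset.mem_range.mpr (by omega)) h
  have hTdeg : T.degree ≤ (n : WithBot ℕ) := by
    refine (degree_sum_le _ _).trans ?_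
    refine Finset.sup_le fun i _ => ?_
    exact (degree_C_mul_X_pow_le _ _).trans (Nat.cast_le.mpr (Nat.sub_le n _))
  set r : Polynomial Fq := (ε - T) %ₘ Q with hr
  have hrdeg : r.degree < ((t : ℕ) : WithBot ℕ) := by
    rw [hr, ← hQt, ← degree_eq_natDegree hQ0]
    exact degree_modByMonic_lt _ hQm
  set f₀ : Polynomial Fq := T + r with hf₀
  have hf0coeff : ∀ i ≤ ℓ, f₀.coeff (n - i) = ε.reverse.coeff i := by
    intro i hi
    rw [hf₀, coeff_add, hTcoeff i hi,
      coeff_eq_zero_of_degree_lt (hrdeg.trans_le (Nat.cast_le.mpr (by omega))), add_zero]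
  have hmk : ∀ p : Polynomial Fq, p.degree ≤ (n : WithBot ℕ) → p.coeff n = 1 →
      p.Monic ∧ p.natDegree = n := by
    intro p h1 h2
    have hle := natDegree_le_iff_degree_le.mpr h1
    exact ⟨monic_of_natDegree_le_of_coeff_eq_one n hle h2,
      le_antisymm hle (le_natDegree_of_ne_zero (by rw [h2]; exact one_ne_zero))⟩
  have hf0n1 : f₀.coeff n = 1 := by
    have := hf0coeff 0 (Nat.zero_le _)
    simpa [coeff_zero_reverse, hεm.leadingCoeff] using this
  have hf0degle : f₀.degree ≤ (n : WithBot ℕ) := by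
    refine (degree_add_le _ _).trans (max_le hTdeg ?_)
    exact le_of_lt (hrdeg.trans_le (Nat.cast_le.mpr (by omega)))
  obtain ⟨hf0m, hf0nd⟩ := hmk f₀ hf0degle hf0n1
  have hQdvd : ε - f₀ = Q * ((ε - T) /ₘ Q) := by
    have h := modByMonic_eq_sub_mul_div (ε - T) Q
    rw [hf₀, hr, h]; ring
  -- key : matching top coefficients gives the reverse congruence
  have key : ∀ f : Polynomial Fq, f.natDegree = n →
      (∀ i ≤ ℓ, f.coeff (n - i) = ε.reverse.coeff i) →
      (X : Polynomial Fq) ^ (ℓ + 1) ∣ ε.reverse - f.reverse := by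
    intro f hnd hco
    rw [X_pow_dvd_iff]
    intro d hd
    have h1 : f.reverse.coeff d = ε.reverse.coeff d := by
      rw [coeff_reverse, hnd, revAt_le (by omega), hco d (by omega)]
    rw [coeff_sub, h1, sub_self]
  have key2 : ∀ f : Polynomial Fq, f.natDegree = n →
      (X : Polynomial Fq) ^ (ℓ + 1) ∣ ε.reverse - f.reverse →
      ∀ i ≤ ℓ, f.coeff (n - i) = ε.reverse.coeff i := by
    intro f hnd hdvd i hi
    have h := (X_pow_dvd_iff.mp hdvd) i (by omega)
    rw [coeff_sub, sub_eq_zero] at h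
    rw [h, coeff_reverse, hnd, revAt_le (by omega)]
  have hQsdeg : ∀ s : Polynomial Fq, s.degree < ((k : ℕ) : WithBot ℕ) →
      (Q * s).degree < (((t + k : ℕ)) : WithBot ℕ) := by
    intro s hs
    rcases eq_or_ne s 0 with rfl | h0
    · rw [mul_zero, degree_zero]; exact WithBot.bot_lt_coe _
    · rw [degree_mul, degree_eq_natDegree hQ0, hQt, degree_eq_natDegree h0]
      have hk : s.natDegree < k := by exact_mod_cast degree_eq_natDegree h0 ▸ hs
      exact_mod_cast Nat.add_lt_add_left hk t
  -- the bijection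
  have hbij : ∃ g : (degreeLT Fq k) → {f : Polynomial Fq // f.Monic ∧ f.natDegree = n ∧
      HayesEquiv ℓ Q ε f}, Function.Bijective g := by
    have hprop : ∀ s : degreeLT Fq k, (f₀ + Q * (s : Polynomial Fq)).Monic ∧
        (f₀ + Q * (s : Polynomial Fq)).natDegree = n ∧
        HayesEquiv ℓ Q ε (f₀ + Q * (s : Polynomial Fq)) := by
      rintro ⟨s, hs⟩
      simp only
      rw [Polynomial.mem_degreeLT] at hs
      have hQs := hQsdeg s hs
      have hQslt : (Q * s).degree < (n : WithBot ℕ) :=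
        hQs.trans_le (Nat.cast_le.mpr (by omega))
      have hco : ∀ i ≤ ℓ, (f₀ + Q * s).coeff (n - i) = ε.reverse.coeff i := by
        intro i hi
        rw [coeff_add, hf0coeff i hi,
          coeff_eq_zero_of_degree_lt (hQs.trans_le (Nat.cast_le.mpr (by omega))), add_zero]
      have hcoeffn : (f₀ + Q * s).coeff n = 1 := by
        have := hco 0 (Nat.zero_le _)
        simpa [coeff_zero_reverse, hεm.leadingCoeff] using this
      obtain ⟨hm, hnd⟩ := hmk _ ((degree_add_le _ _).trans (max_le hf0degle hQslt.le)) hcoeffn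
      refine ⟨hm, hnd, hεQ, ?_, key _ hnd hco, ?_⟩
      · have hrw : f₀ + Q * s = ε + Q * (s - (ε - T) /ₘ Q) := by
          linear_combination -hQdvd
        rw [hrw]
        exact hεQ.add_mul_left_left _
      · exact ⟨(ε - T) /ₘ Q - s, by linear_combination hQdvd⟩
    refine ⟨fun s => ⟨f₀ + Q * (s : Polynomial Fq), hprop s⟩, ?_, ?_⟩
    · rintro ⟨s₁, h₁⟩ ⟨s₂, h₂⟩ h
      simp only [Subtype.mk_eq_mk, add_right_inj] at h
      exact Subtype.ext (mul_left_cancel₀ hQ0 h)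
    · rintro ⟨f, hm, hnd, hcop1, hcop2, hrev, hdvd⟩
      have hco := key2 f hnd hrev
      have hdeg : (f - f₀).degree < (((t + k : ℕ)) : WithBot ℕ) := by
        rw [degree_lt_iff_coeff_zero]
        intro m hm'
        rcases le_or_gt m n with hmn | hmn
        · have : m = n - (n - m) := by omega
          rw [coeff_sub, this, hco _ (by omega), hf0coeff _ (by omega), sub_self]
        · rw [coeff_sub, coeff_eq_zero_of_natDegree_lt (by omega : f.natDegree < m),
            coeff_eq_zero_of_natDegree_lt (by omega : f₀.natDegree < m), sub_self]
      have hQdvd2 : Q ∣ f - f₀ := by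
        have h := dvd_sub ⟨_, hQdvd⟩ hdvd
        rwa [show (ε - f₀) - (ε - f) = f - f₀ by ring] at h
      obtain ⟨s, hs⟩ := hQdvd2
      have hsdeg : s.degree < ((k : ℕ) : WithBot ℕ) := by
        rcases eq_or_ne s 0 with rfl | h0
        · rw [degree_zero]; exact WithBot.bot_lt_coe _
        · rw [hs, degree_mul, degree_eq_natDegree hQ0, hQt, degree_eq_natDegree h0] at hdeg
          rw [degree_eq_natDegree h0]
          have h2 : t + s.natDegree < t + k := by exact_mod_cast hdeg
          exact_mod_cast (by omega : s.natDegree < k)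
      refine ⟨⟨s, Polynomial.mem_degreeLT.mpr hsdeg⟩, Subtype.ext ?_⟩
      show f₀ + Q * s = f
      linear_combination -hs
  obtain ⟨g, hg⟩ := hbij
  rw [← Nat.card_eq_of_bijective g hg, Nat.card_congr (degreeLTEquiv Fq k).toEquiv,
    Nat.card_eq_fintype_card, Fintype.card_fun]
  simp
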